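/- In su(3) ⊗ C with L₁ = X₁ − iY₁, L₂ = X₂ − iY₂, L₃ = X₃ − iY₃, one has [L₁,L₂] = 0, [L₁,L₃] = 2iL₂, [L₂,L₃] = 0; hence h = span_C{L₁, L₂, L₃} is a Lie subalgebra of su(3) ⊗ C with h ∩ h̄ = 0. -/

import Mathlib

open Matrix

noncomputable section

def T1 : Matrix (Fin 3) (Fin 3) ℂ := !![Complex.I, 0, 0; 0, -Complex.I, 0; 0, 0, 0]
def T2 : Matrix (Fin 3) (Fin 3) ℂ := !![Complex.I, 0, 0; 0, Complex.I, 0; 0, 0, -2*Complex.I]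
def X1 : Matrix (Fin 3) (Fin 3) ℂ := !![0, Complex.I, 0; Complex.I, 0, 0; 0, 0, 0]
def Y1 : Matrix (Fin 3) (Fin 3) ℂ := !![0, -1, 0; 1, 0, 0; 0, 0, 0]
def X2 : Matrix (Fin 3) (Fin 3) ℂ := !![0, 0, Complex.I; 0, 0, 0; Complex.I, 0, 0]
def Y2 : Matrix (Fin 3) (Fin 3) ℂ := !![0, 0, -1; 0, 0, 0; 1, 0, 0]
def X3 : Matrix (Fin 3) (Fin 3) ℂ := !![0, 0, 0; 0, 0, Complex.I; 0, Complex.I, 0]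
def Y3 : Matrix (Fin 3) (Fin 3) ℂ := !![0, 0, 0; 0, 0, -1; 0, 1, 0]

def L1 : Matrix (Fin 3) (Fin 3) ℂ := X1 - Complex.I • Y1
def L2 : Matrix (Fin 3) (Fin 3) ℂ := X2 - Complex.I • Y2
def L3 : Matrix (Fin 3) (Fin 3) ℂ := X3 - Complex.I • Y3

lemma L1_eq : L1 = !![0, 2*Complex.I, 0; 0, 0, 0; 0, 0, 0] := by
  ext i j; fin_cases i <;> fin_cases j <;>
    simp [L1, X1, Y1, Matrix.vecHead, Matrix.vecTail] <;> ring_nf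

lemma L2_eq : L2 = !![0, 0, 2*Complex.I; 0, 0, 0; 0, 0, 0] := by
  ext i j; fin_cases i <;> fin_cases j <;>
    simp [L2, X2, Y2, Matrix.vecHead, Matrix.vecTail] <;> ring_nf

lemma L3_eq : L3 = !![0, 0, 0; 0, 0, 2*Complex.I; 0, 0, 0] := by
  ext i j; fin_cases i <;> fin_cases j <;>
    simp [L3, X3, Y3, Matrix.vecHead, Matrix.vecTail] <;> ring_nf

lemma br12 : ⁅L1, L2⁆ = 0 := by
  ext i j; fin_cases i <;> fin_cases j <;>
    simp [Ring.lie_def, L1_eq, L2_eq, Matrix.mul_apply, Fin.sum_univ_three,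
      Matrix.vecHead, Matrix.vecTail]

lemma br13 : ⁅L1, L3⁆ = (2 * Complex.I) • L2 := by
  ext i j; fin_cases i <;> fin_cases j <;>
    simp [Ring.lie_def, L1_eq, L2_eq, L3_eq, Matrix.mul_apply, Fin.sum_univ_three,
      Matrix.vecHead, Matrix.vecTail] <;> ring_nf

lemma br23 : ⁅L2, L3⁆ = 0 := by
  ext i j; fin_cases i <;> fin_cases j <;>
    simp [Ring.lie_def, L2_eq, L3_eq, Matrix.mul_apply, Fin.sum_univ_three,
      Matrix.vecHead, Matrix.vecTail]

section

attribute [local instance] LieRing.ofAssociativeRing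

lemma br21 : ⁅L2, L1⁆ = 0 := by rw [← lie_skew, br12, neg_zero]
lemma br31 : ⁅L3, L1⁆ = -((2 * Complex.I) • L2) := by rw [← lie_skew, br13]
lemma br32 : ⁅L3, L2⁆ = 0 := by rw [← lie_skew, br23, neg_zero]

end

lemma mem_span_iff (A : Matrix (Fin 3) (Fin 3) ℂ) :
    A ∈ Submodule.span ℂ ({L1, L2, L3} : Set (Matrix (Fin 3) (Fin 3) ℂ)) ↔
      ∃ a b c : ℂ, A = a • L1 + b • L2 + c • L3 := by
  simp only [Submodule.mem_span_insert, Submodule.mem_span_singleton]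
  constructor
  · rintro ⟨a, z, ⟨b, w, ⟨c, rfl⟩, rfl⟩, rfl⟩
    exact ⟨a, b, c, by abel⟩
  · rintro ⟨a, b, c, rfl⟩
    exact ⟨a, _, ⟨b, _, ⟨c, rfl⟩, rfl⟩, by abel⟩

theorem stmt9 :
    ⁅L1, L2⁆ = 0 ∧ ⁅L1, L3⁆ = (2 * Complex.I) • L2 ∧ ⁅L2, L3⁆ = 0 ∧
    (∀ A ∈ Submodule.span ℂ ({L1, L2, L3} : Set (Matrix (Fin 3) (Fin 3) ℂ)),
      ∀ B ∈ Submodule.span ℂ ({L1, L2, L3} : Set (Matrix (Fin 3) (Fin 3) ℂ)),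
        ⁅A, B⁆ ∈ Submodule.span ℂ ({L1, L2, L3} : Set (Matrix (Fin 3) (Fin 3) ℂ))) ∧
    (∀ M ∈ Submodule.span ℂ ({L1, L2, L3} : Set (Matrix (Fin 3) (Fin 3) ℂ)),
      -Mᴴ ∈ Submodule.span ℂ ({L1, L2, L3} : Set (Matrix (Fin 3) (Fin 3) ℂ)) → M = 0) := by
  refine ⟨br12, br13, br23, ?_, ?_⟩
  · intro A hA B hB
    rw [mem_span_iff] at hA hB
    obtain ⟨a, b, c, rfl⟩ := hA
    obtain ⟨a', b', c', rfl⟩ := hB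
    have key : ⁅a • L1 + b • L2 + c • L3, a' • L1 + b' • L2 + c' • L3⁆
        = (a * c' * (2 * Complex.I) - c * a' * (2 * Complex.I)) • L2 := by
      letI := LieRing.ofAssociativeRing (A := Matrix (Fin 3) (Fin 3) ℂ)
      simp only [lie_add, add_lie, lie_smul, smul_lie, lie_self, br12, br13, br23,
        br21, br31, br32, smul_zero, smul_neg, smul_smul]
      module
    rw [key]
    exact Submodule.smul_mem _ _ (Submodule.subset_span (by simp))
  · intro M hM hM'
    rw [mem_span_iff] at hM hM'
    obtain ⟨a, b, c, rfl⟩ := hM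
    obtain ⟨a', b', c', h⟩ := hM'
    have h01 := congrFun (congrFun h 1) 0
    have h02 := congrFun (congrFun h 2) 0
    have h12 := congrFun (congrFun h 2) 1
    simp [L1_eq, L2_eq, L3_eq, Matrix.add_apply, Matrix.smul_apply, Matrix.neg_apply,
      Matrix.conjTranspose_apply, Matrix.vecHead, Matrix.vecTail] at h01 h02 h12
    rw [h01, h02, h12]
    simp
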